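/- Let A, B be n×n positive definite matrices and a, b > 0. Then a²A + b²B + 2ab(A # B) = W_{a,b}(A,B) if and only if A and B commute. (The key step: if Y is an invertible complex matrix with 2|Y| = Y + Y*, then Y is positive definite.) -/

import Mathlib

open Matrix ComplexOrder

namespace Matrix.PosSemidef

variable {m 𝕜 : Type*} [Fintype m] [DecidableEq m] [RCLike 𝕜]

/-- The positive semidefinite square root of a positive semidefinite matrix
(the definition of Mathlib, December 2024, removed since). -/
noncomputable def sqrt {A : Matrix m m 𝕜} (hA : PosSemidef A) : Matrix m m 𝕜 :=
  hA.1.eigenvectorUnitary.1 * diagonal ((↑) ∘ (√·) ∘ hA.1.eigenvalues) *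
  (star hA.1.eigenvectorUnitary : Matrix m m 𝕜)

lemma posSemidef_sqrt {A : Matrix m m 𝕜} (hA : PosSemidef A) : PosSemidef hA.sqrt := by
  apply PosSemidef.mul_mul_conjTranspose_same
  refine posSemidef_diagonal_iff.mpr fun i ↦ ?_
  rw [Function.comp_apply, RCLike.nonneg_iff]
  constructor
  · simp only [RCLike.ofReal_re]
    exact Real.sqrt_nonneg _
  · simp only [RCLike.ofReal_im]

end Matrix.PosSemidef

namespace Matrix.PosSemidef

variable {m 𝕜 : Type*} [Fintype m] [DecidableEq m] [RCLike 𝕜]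

open scoped MatrixOrder in
lemma sqrt_eq_cfc_sqrt {A : Matrix m m 𝕜} (hA : PosSemidef A) : hA.sqrt = CFC.sqrt A := by
  rw [CFC.sqrt_eq_real_sqrt A hA.nonneg, cfcₙ_eq_cfc, hA.1.cfc_eq, IsHermitian.cfc,
    Unitary.conjStarAlgAut_apply]
  rfl

open scoped MatrixOrder in
lemma sqrt_mul_self {A : Matrix m m 𝕜} (hA : PosSemidef A) : hA.sqrt * hA.sqrt = A := by
  rw [sqrt_eq_cfc_sqrt]
  exact CFC.sqrt_mul_sqrt_self A hA.nonneg

open scoped MatrixOrder in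
lemma eq_sqrt_of_sq_eq {A : Matrix m m 𝕜} (hA : PosSemidef A) {B : Matrix m m 𝕜}
    (hB : PosSemidef B) (h : A ^ 2 = B) : A = hB.sqrt := by
  rw [sqrt_eq_cfc_sqrt]
  exact (CFC.sqrt_unique (by rw [← h, sq]) hA.nonneg).symm

end Matrix.PosSemidef

namespace Heron

variable {n : ℕ}

def WeakMaj {n : ℕ} (x y : Fin n → ℝ) : Prop :=
  ∀ s : Finset (Fin n), ∃ t : Finset (Fin n),
    t.card = s.card ∧ ∑ i ∈ s, x i ≤ ∑ i ∈ t, y i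

def Maj {n : ℕ} (x y : Fin n → ℝ) : Prop :=
  WeakMaj x y ∧ ∑ i, x i = ∑ i, y i

lemma sandwich_posSemidef {S T : Matrix (Fin n) (Fin n) ℂ} (hS : S.IsHermitian)
    (hT : T.PosSemidef) : (S * T * S).PosSemidef := by
  have h := hT.mul_mul_conjTranspose_same S
  rwa [hS.eq] at h

noncomputable def geomMean {A B : Matrix (Fin n) (Fin n) ℂ}
    (hA : A.PosDef) (hB : B.PosDef) : Matrix (Fin n) (Fin n) ℂ :=
  hA.posSemidef.sqrt *
    (sandwich_posSemidef hA.posSemidef.posSemidef_sqrt.isHermitian.inv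
        hB.posSemidef).sqrt *
    hA.posSemidef.sqrt

lemma geomMean_posSemidef {A B : Matrix (Fin n) (Fin n) ℂ}
    (hA : A.PosDef) (hB : B.PosDef) : (geomMean hA hB).PosSemidef :=
  sandwich_posSemidef hA.posSemidef.posSemidef_sqrt.isHermitian
    (Matrix.PosSemidef.posSemidef_sqrt _)

noncomputable def specMean {A B : Matrix (Fin n) (Fin n) ℂ}
    (hA : A.PosDef) (hB : B.PosDef) : Matrix (Fin n) (Fin n) ℂ :=
  (geomMean_posSemidef hA.inv hB).sqrt * A * (geomMean_posSemidef hA.inv hB).sqrt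

def HasPosSpectrum (M : Matrix (Fin n) (Fin n) ℂ) : Prop :=
  ∀ z ∈ spectrum ℂ M, 0 < z.re ∧ z.im = 0

def IsPrincipalSqrt (M S : Matrix (Fin n) (Fin n) ℂ) : Prop :=
  S * S = M ∧ HasPosSpectrum S

noncomputable def absMat (Y : Matrix (Fin n) (Fin n) ℂ) : Matrix (Fin n) (Fin n) ℂ :=
  (Matrix.posSemidef_conjTranspose_mul_self Y).sqrt

noncomputable def posPart (H : Matrix (Fin n) (Fin n) ℂ) : Matrix (Fin n) (Fin n) ℂ :=
  ((1 : ℂ) / 2) • (absMat H + H)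

/-! ### Auxiliary lemmas -/

open Polynomial in
lemma mem_spectrum_iff_det {M : Matrix (Fin n) (Fin n) ℂ} {μ : ℂ} :
    μ ∈ spectrum ℂ M ↔ (μ • (1 : Matrix (Fin n) (Fin n) ℂ) - M).det = 0 := by
  rw [spectrum.mem_iff, Algebra.algebraMap_eq_smul_one]
  rw [Matrix.isUnit_iff_isUnit_det, isUnit_iff_ne_zero, not_not]

open Polynomial in
lemma charpoly_eval' (M : Matrix (Fin n) (Fin n) ℂ) (μ : ℂ) :
    M.charpoly.eval μ = (μ • (1 : Matrix (Fin n) (Fin n) ℂ) - M).det := by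
  rw [Matrix.charpoly, ← Polynomial.coe_evalRingHom, RingHom.map_det]
  congr 1
  ext i j
  by_cases h : i = j <;>
    simp [Matrix.charmatrix_apply, Matrix.diagonal_apply, Matrix.one_apply, h]

lemma posDef_hasPosSpectrum {M : Matrix (Fin n) (Fin n) ℂ} (hM : M.PosDef) :
    HasPosSpectrum M := by
  intro z hz
  rw [mem_spectrum_iff_det] at hz
  obtain ⟨v, hv, hv0⟩ := (Matrix.exists_mulVec_eq_zero_iff).2 hz
  have hMv : M *ᵥ v = z • v := by
    have := sub_mulVec (z • (1 : Matrix (Fin n) (Fin n) ℂ)) M v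
    rw [hv0] at this
    have h2 : (z • (1 : Matrix (Fin n) (Fin n) ℂ)) *ᵥ v = z • v := by
      simp [smul_mulVec]
    rw [eq_comm, sub_eq_zero] at this
    rw [← this, h2]
  have hpos : 0 < star v ⬝ᵥ M *ᵥ v := hM.dotProduct_mulVec_pos hv
  rw [hMv] at hpos
  have hd : 0 < star v ⬝ᵥ v := Matrix.dotProduct_star_self_pos_iff.2 hv
  rw [Complex.lt_def] at hd hpos
  simp only [Complex.zero_re, Complex.zero_im] at hd hpos
  have h1 : star v ⬝ᵥ z • v = z * (star v ⬝ᵥ v) := by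
    rw [dotProduct_smul, smul_eq_mul]
  rw [h1] at hpos
  set d := star v ⬝ᵥ v
  have hre : (z * d).re = z.re * d.re := by
    rw [Complex.mul_re, ← hd.2, mul_zero, sub_zero]
  have him : (z * d).im = z.im * d.re := by
    rw [Complex.mul_im, ← hd.2, mul_zero, zero_add]
  constructor
  · have := hpos.1
    rw [hre] at this
    rcases mul_pos_iff.mp this with h | h
    · exact h.1
    · exact absurd hd.1 (not_lt.2 h.2.le)
  · have := hpos.2.symm
    rw [him] at this
    exact (mul_eq_zero.1 this).resolve_right (ne_of_gt hd.1)

open Polynomial in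
lemma principal_sqrt_unique {X Y : Matrix (Fin n) (Fin n) ℂ}
    (hXY : X * X = Y * Y) (hX : HasPosSpectrum X) (hY : HasPosSpectrum Y) : X = Y := by
  rcases Nat.eq_zero_or_pos n with hn | hn
  · subst hn; exact Subsingleton.elim X Y
  have : NeZero n := ⟨hn.ne'⟩
  set D := X - Y with hD
  have hkey : X * D = D * (-Y) := by
    simp only [hD, mul_sub, sub_mul, mul_neg]
    rw [hXY]; abel
  have hpow : ∀ k : ℕ, X ^ k * D = D * (-Y) ^ k := by
    intro k
    induction k with
    | zero => simp
    | succ k ih =>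
      rw [pow_succ, pow_succ, mul_assoc, hkey, ← mul_assoc, ih, mul_assoc]
  have haeval : ∀ p : ℂ[X], aeval X p * D = D * aeval (-Y) p := by
    intro p
    induction p using Polynomial.induction_on' with
    | add p q hp hq => simp [map_add, add_mul, mul_add, hp, hq]
    | monomial k c =>
      simp only [aeval_monomial]
      rw [mul_assoc, hpow, ← mul_assoc, ← mul_assoc, Algebra.commutes]
  have hCH : aeval X X.charpoly = 0 := Matrix.aeval_self_charpoly X
  have h0 : D * aeval (-Y) X.charpoly = 0 := by
    rw [← haeval, hCH, zero_mul]
  have hdeg : 0 < X.charpoly.degree := by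
    rw [Matrix.charpoly_degree_eq_dim]
    simpa using hn
  have hunit : IsUnit (aeval (-Y) X.charpoly) := by
    by_contra hnu
    have h0mem : (0 : ℂ) ∈ spectrum ℂ (aeval (-Y) X.charpoly) :=
      (spectrum.zero_mem_iff ℂ).2 hnu
    rw [spectrum.map_polynomial_aeval_of_degree_pos (-Y) X.charpoly hdeg] at h0mem
    obtain ⟨μ, hμmem, hμ⟩ := h0mem
    have hμX : μ ∈ spectrum ℂ X := by
      rw [mem_spectrum_iff_det, ← charpoly_eval' X μ]
      exact hμ
    have h1 := hX μ hμX
    have hμY : -μ ∈ spectrum ℂ Y := by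
      rw [← spectrum.neg_eq] at hμmem
      simpa using hμmem
    have h2 := hY _ hμY
    simp only [Complex.neg_re] at h2
    linarith [h1.1, h2.1]
  have hD0 : D = 0 := by
    obtain ⟨u, hu⟩ := hunit
    have := congrArg (· * (↑u⁻¹ : Matrix (Fin n) (Fin n) ℂ)) h0
    rwa [mul_assoc, ← hu, Units.mul_inv, mul_one, zero_mul] at this
  rw [← sub_eq_zero]; exact hD0

lemma isUnit_of_hasPosSpectrum {M : Matrix (Fin n) (Fin n) ℂ}
    (h : HasPosSpectrum M) : IsUnit M := by
  by_contra hnu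
  have := h 0 ((spectrum.zero_mem_iff ℂ).2 hnu)
  simp at this

lemma posDef_of_posSemidef_isUnit {M : Matrix (Fin n) (Fin n) ℂ}
    (h : M.PosSemidef) (hu : IsUnit M.det) : M.PosDef := by
  refine posDef_iff_dotProduct_mulVec.mpr ⟨h.1, fun x hx => ?_⟩
  rcases (h.dotProduct_mulVec_nonneg x).lt_or_eq with hlt | heq
  · exact hlt
  · exfalso
    have hz : M *ᵥ x = 0 := (h.dotProduct_mulVec_zero_iff x).1 heq.symm
    apply hx
    have : M⁻¹ *ᵥ (M *ᵥ x) = x := by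
      rw [mulVec_mulVec, Matrix.nonsing_inv_mul M hu, one_mulVec]
    rw [← this, hz, mulVec_zero]

lemma hasPosSpectrum_conj {M U : Matrix (Fin n) (Fin n) ℂ} (hU : IsUnit U)
    (h : HasPosSpectrum M) : HasPosSpectrum (U * M * U⁻¹) := by
  intro z hz
  apply h
  obtain ⟨u, hu⟩ := hU
  have hinv : U⁻¹ = (↑u⁻¹ : Matrix (Fin n) (Fin n) ℂ) := by
    rw [← hu, Matrix.coe_units_inv]
  rw [hinv, ← hu, spectrum.units_conjugate] at hz
  exact hz

lemma commute_sqrt {M X : Matrix (Fin n) (Fin n) ℂ} (hM : M.PosSemidef)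
    (hMd : IsUnit M.det) (hX : IsUnit X) (h : X * M = M * X) :
    X * hM.sqrt = hM.sqrt * X := by
  set R := hM.sqrt with hRdef
  have hR2 : R * R = M := hM.sqrt_mul_self
  have hRdet : IsUnit R.det := by
    have : IsUnit (R.det * R.det) := by rw [← Matrix.det_mul, hR2]; exact hMd
    exact isUnit_of_mul_isUnit_left this
  have hRpd : R.PosDef := posDef_of_posSemidef_isUnit hM.posSemidef_sqrt hRdet
  have hXd : IsUnit X.det := (Matrix.isUnit_iff_isUnit_det X).1 hX
  have hXinv : X * X⁻¹ = 1 := Matrix.mul_nonsing_inv X hXd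
  have hinvX : X⁻¹ * X = 1 := Matrix.nonsing_inv_mul X hXd
  have hZZ : (X * R * X⁻¹) * (X * R * X⁻¹) = R * R := by
    calc (X * R * X⁻¹) * (X * R * X⁻¹)
        = X * R * (X⁻¹ * X) * R * X⁻¹ := by simp only [Matrix.mul_assoc]
      _ = X * (R * R) * X⁻¹ := by rw [hinvX]; simp only [Matrix.mul_assoc, Matrix.one_mul]
      _ = M * X * X⁻¹ := by rw [hR2, ← h]
      _ = R * R := by rw [Matrix.mul_assoc, hXinv, Matrix.mul_one, hR2]
  have hZspec : HasPosSpectrum (X * R * X⁻¹) :=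
    hasPosSpectrum_conj hX (posDef_hasPosSpectrum hRpd)
  have hZR : X * R * X⁻¹ = R :=
    principal_sqrt_unique hZZ hZspec (posDef_hasPosSpectrum hRpd)
  calc X * R = X * R * (X⁻¹ * X) := by rw [hinvX, Matrix.mul_one]
    _ = (X * R * X⁻¹) * X := by simp only [Matrix.mul_assoc]
    _ = R * X := by rw [hZR]

lemma hasPosSpectrum_conjTranspose {M : Matrix (Fin n) (Fin n) ℂ}
    (h : HasPosSpectrum M) : HasPosSpectrum Mᴴ := by
  intro z hz
  have hz' : (starRingEnd ℂ) z ∈ spectrum ℂ M := by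
    rw [mem_spectrum_iff_det] at hz ⊢
    have hdet : ((starRingEnd ℂ) z • (1 : Matrix (Fin n) (Fin n) ℂ) - M)ᴴ
        = z • (1 : Matrix (Fin n) (Fin n) ℂ) - Mᴴ := by
      rw [conjTranspose_sub, conjTranspose_smul, conjTranspose_one]
      simp
    have h1 := congrArg Matrix.det hdet
    rw [Matrix.det_conjTranspose, hz] at h1
    have h2 := congrArg star h1
    simpa using h2
  obtain ⟨h1, h2⟩ := h _ hz'
  constructor
  · simpa using h1
  · have : -z.im = 0 := by simpa using h2
    linarith

lemma absKey {Y : Matrix (Fin n) (Fin n) ℂ} (hYd : IsUnit Y.det)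
    (h : (2 : ℂ) • absMat Y = Y + Yᴴ) : Y.PosDef := by
  set P := absMat Y with hPdef
  have hPsd : P.PosSemidef := (Matrix.posSemidef_conjTranspose_mul_self Y).posSemidef_sqrt
  have hPP : P * P = Yᴴ * Y := (Matrix.posSemidef_conjTranspose_mul_self Y).sqrt_mul_self
  set K := Y - P with hK
  have hY' : Y = P + K := by rw [hK]; abel
  have hYH' : Yᴴ = P - K := by
    have : Yᴴ = (2 : ℂ) • P - Y := by rw [h]; abel
    rw [this, hY']
    rw [two_smul]; abel
  have hKH : Kᴴ = -K := by
    have := congrArg conjTranspose hY'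
    rw [conjTranspose_add, hPsd.1.eq, hYH'] at this
    have h2 : P - K = P + Kᴴ := this
    rw [sub_eq_add_neg] at h2
    exact (add_left_cancel h2.symm)
  have hK2 : K * K = P * K - K * P := by
    have hexp : Yᴴ * Y = P * P + P * K - K * P - K * K := by
      rw [hYH', hY']
      noncomm_ring
    have heq : P * P = P * P + P * K - K * P - K * K := by rw [← hexp, hPP]
    have h2 : (P * P + P * K - K * P - K * K) - P * P = 0 := by
      rw [← heq]; simp
    have h1 : P * K - K * P - K * K = 0 := by
      calc P * K - K * P - K * K
          = (P * P + P * K - K * P - K * K) - P * P := by abel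
        _ = 0 := h2
    exact (sub_eq_zero.mp h1).symm
  have htr : (Kᴴ * K).trace = 0 := by
    have h1 : (K * K).trace = 0 := by
      rw [hK2, Matrix.trace_sub, Matrix.trace_mul_comm, sub_self]
    rw [hKH, Matrix.neg_mul, Matrix.trace_neg, h1, neg_zero]
  have hK0 : K = 0 := by
    have hdiag : ∀ i, (Kᴴ * K) i i = 0 := by
      have hnn : ∀ i ∈ Finset.univ, (0 : ℂ) ≤ (Kᴴ * K) i i := by
        intro i _
        rw [Matrix.mul_apply]
        refine Finset.sum_nonneg fun j _ => ?_
        rw [Matrix.conjTranspose_apply]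
        exact star_mul_self_nonneg _
      intro i
      exact (Finset.sum_eq_zero_iff_of_nonneg hnn).1 htr i (Finset.mem_univ i)
    ext i j
    have h2 := hdiag j
    rw [Matrix.mul_apply] at h2
    have hnn : ∀ k ∈ Finset.univ, (0 : ℂ) ≤ Kᴴ j k * K k j := by
      intro k _
      rw [Matrix.conjTranspose_apply]
      exact star_mul_self_nonneg _
    have h3 := (Finset.sum_eq_zero_iff_of_nonneg hnn).1 h2 i (Finset.mem_univ i)
    rw [Matrix.conjTranspose_apply] at h3
    have := (CStarRing.star_mul_self_eq_zero_iff (K i j)).1 h3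
    simpa using this
  have hYP : Y = P := by rw [hY', hK0, add_zero]
  exact posDef_of_posSemidef_isUnit (hYP ▸ hPsd) hYd

set_option maxHeartbeats 800000 in
/-- equality `a²A + b²B + 2ab(A # B) = W_{a,b}(A,B)` holds iff
`A` and `B` commute; the key step: an invertible `Y` with `2|Y| = Y + Y*` is
positive definite. -/
theorem kubo_heron_equality_iff_commute {n : ℕ}
    (A B S T : Matrix (Fin n) (Fin n) ℂ)
    (hA : A.PosDef) (hB : B.PosDef) (a b : ℝ) (ha : 0 < a) (hb : 0 < b)
    (hS : IsPrincipalSqrt (A * B) S) (hT : IsPrincipalSqrt (B * A) T) :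
    (((a : ℂ) ^ 2) • A + ((b : ℂ) ^ 2) • B + (2 * (a : ℂ) * b) • geomMean hA hB
        = ((a : ℂ) ^ 2) • A + ((b : ℂ) ^ 2) • B + ((a : ℂ) * b) • (S + T)
      ↔ A * B = B * A) ∧
    (∀ Y : Matrix (Fin n) (Fin n) ℂ, IsUnit Y.det →
      (2 : ℂ) • absMat Y = Y + Yᴴ → Y.PosDef) := by
  refine ⟨?_, fun Y hYd h => absKey hYd h⟩
  -- setup
  set R := hA.posSemidef.sqrt with hRdef
  set Q := (sandwich_posSemidef hA.posSemidef.posSemidef_sqrt.isHermitian.inv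
      hB.posSemidef).sqrt with hQdef
  have hGdef : geomMean hA hB = R * Q * R := rfl
  have hRH : Rᴴ = R := hA.posSemidef.posSemidef_sqrt.isHermitian.eq
  have hR2 : R * R = A := hA.posSemidef.sqrt_mul_self
  have hAu : IsUnit A := hA.isUnit
  have hBu : IsUnit B := hB.isUnit
  have hAdet : IsUnit A.det := (Matrix.isUnit_iff_isUnit_det A).1 hAu
  have hRdet : IsUnit R.det := by
    have : IsUnit (R.det * R.det) := by rw [← Matrix.det_mul, hR2]; exact hAdet
    exact isUnit_of_mul_isUnit_left this
  have hRu : IsUnit R := (Matrix.isUnit_iff_isUnit_det R).2 hRdet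
  have hRinv : R * R⁻¹ = 1 := Matrix.mul_nonsing_inv R hRdet
  have hinvR : R⁻¹ * R = 1 := Matrix.nonsing_inv_mul R hRdet
  have hRiH : (R⁻¹)ᴴ = R⁻¹ := hA.posSemidef.posSemidef_sqrt.isHermitian.inv.eq
  have hRiu : IsUnit (R⁻¹ : Matrix (Fin n) (Fin n) ℂ) :=
    (Matrix.isUnit_iff_isUnit_det _).2 (Matrix.isUnit_nonsing_inv_det R hRdet)
  have hc1 : ∀ X : Matrix (Fin n) (Fin n) ℂ, R * (R⁻¹ * X) = X := fun X => by
    rw [← Matrix.mul_assoc, hRinv, Matrix.one_mul]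
  have hc2 : ∀ X : Matrix (Fin n) (Fin n) ℂ, R⁻¹ * (R * X) = X := fun X => by
    rw [← Matrix.mul_assoc, hinvR, Matrix.one_mul]
  have hQ2 : Q * Q = R⁻¹ * B * R⁻¹ := Matrix.PosSemidef.sqrt_mul_self _
  have hQsd : Q.PosSemidef := Matrix.PosSemidef.posSemidef_sqrt _
  have hCu : IsUnit (R⁻¹ * B * R⁻¹) := (hRiu.mul hBu).mul hRiu
  have hCdet : IsUnit (R⁻¹ * B * R⁻¹).det := (Matrix.isUnit_iff_isUnit_det _).1 hCu
  have hQdet : IsUnit Q.det := by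
    have : IsUnit (Q.det * Q.det) := by rw [← Matrix.det_mul, hQ2]; exact hCdet
    exact isUnit_of_mul_isUnit_left this
  have hQu : IsUnit Q := (Matrix.isUnit_iff_isUnit_det Q).2 hQdet
  have hQpd : Q.PosDef := posDef_of_posSemidef_isUnit hQsd hQdet
  have hQ2' : ∀ X : Matrix (Fin n) (Fin n) ℂ,
      Q * (Q * X) = R⁻¹ * (B * (R⁻¹ * X)) := fun X => by
    rw [← Matrix.mul_assoc, hQ2]; simp only [Matrix.mul_assoc]
  have hGsd : (R * Q * R).PosSemidef := hGdef ▸ geomMean_posSemidef hA hB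
  have hGu : IsUnit (R * Q * R) := (hRu.mul hQu).mul hRu
  have hGpd : (R * Q * R).PosDef :=
    posDef_of_posSemidef_isUnit hGsd ((Matrix.isUnit_iff_isUnit_det _).1 hGu)
  have hABBA : (A * B)ᴴ = B * A := by
    rw [Matrix.conjTranspose_mul, hA.1.eq, hB.1.eq]
  have hSu : IsUnit S := isUnit_of_hasPosSpectrum hS.2
  constructor
  · -- equality → commute
    intro heq
    rw [hGdef] at heq
    have h1 : (2 * (a : ℂ) * b) • (R * Q * R) = ((a : ℂ) * b) • (S + T) :=
      add_left_cancel heq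
    have hab : ((a : ℂ) * b) ≠ 0 := by
      apply mul_ne_zero <;> simp [Complex.ofReal_ne_zero, ha.ne', hb.ne']
    have hST : S + T = (2 : ℂ) • (R * Q * R) := by
      have h2 : ((a : ℂ) * b) • ((2 : ℂ) • (R * Q * R)) = ((a : ℂ) * b) • (S + T) := by
        rw [smul_smul, ← h1]
        congr 1
        ring
      exact (smul_right_injective _ hab h2).symm
    have hTS : T = Sᴴ := by
      refine principal_sqrt_unique ?_ hT.2 (hasPosSpectrum_conjTranspose hS.2)
      rw [hT.1, ← Matrix.conjTranspose_mul, hS.1, hABBA]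
    -- representation S = R * N * R⁻¹
    have hM'sd : (R * B * R).PosSemidef :=
      sandwich_posSemidef hA.posSemidef.posSemidef_sqrt.isHermitian hB.posSemidef
    set N := hM'sd.sqrt with hNdef
    have hN2 : N * N = R * B * R := hM'sd.sqrt_mul_self
    have hN2' : ∀ X : Matrix (Fin n) (Fin n) ℂ,
        N * (N * X) = R * (B * (R * X)) := fun X => by
      rw [← Matrix.mul_assoc, hN2]; simp only [Matrix.mul_assoc]
    have hM'u : IsUnit (R * B * R) := (hRu.mul hBu).mul hRu
    have hNdet : IsUnit N.det := by
      have : IsUnit (N.det * N.det) := by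
        rw [← Matrix.det_mul, hN2]
        exact (Matrix.isUnit_iff_isUnit_det _).1 hM'u
      exact isUnit_of_mul_isUnit_left this
    have hNpd : N.PosDef := posDef_of_posSemidef_isUnit hM'sd.posSemidef_sqrt hNdet
    have hNH : Nᴴ = N := hM'sd.posSemidef_sqrt.isHermitian.eq
    have hrep : S = R * N * R⁻¹ := by
      refine principal_sqrt_unique ?_ hS.2
        (hasPosSpectrum_conj hRu (posDef_hasPosSpectrum hNpd))
      rw [hS.1, ← hR2]
      simp only [Matrix.mul_assoc, hc2, hN2', hc1, hRinv, hinvR, Matrix.mul_one,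
        Matrix.one_mul]
    have hYH : (R⁻¹ * S * R⁻¹)ᴴ = R⁻¹ * Sᴴ * R⁻¹ := by
      simp only [Matrix.conjTranspose_mul, hRiH, Matrix.mul_assoc]
    have hSH : Sᴴ = R⁻¹ * N * R := by
      rw [hrep]
      simp only [Matrix.conjTranspose_mul, hRiH, hRH, hNH, Matrix.mul_assoc]
    have hYtY : (R⁻¹ * S * R⁻¹)ᴴ * (R⁻¹ * S * R⁻¹) = R⁻¹ * B * R⁻¹ := by
      rw [hYH, hSH, hrep]
      simp only [Matrix.mul_assoc, hc1, hc2, hN2', hRinv, hinvR, Matrix.mul_one,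
        Matrix.one_mul]
    have habsY : absMat (R⁻¹ * S * R⁻¹) = Q := by
      symm
      refine Matrix.PosSemidef.eq_sqrt_of_sq_eq hQsd
        (Matrix.posSemidef_conjTranspose_mul_self (R⁻¹ * S * R⁻¹)) ?_
      rw [pow_two, hQ2, ← hYtY]
    have hSsum : S + Sᴴ = (2 : ℂ) • (R * Q * R) := by rw [← hTS]; exact hST
    have hsum : (R⁻¹ * S * R⁻¹) + (R⁻¹ * S * R⁻¹)ᴴ = (2 : ℂ) • Q := by
      rw [hYH]
      have hfac : R⁻¹ * S * R⁻¹ + R⁻¹ * Sᴴ * R⁻¹ = R⁻¹ * (S + Sᴴ) * R⁻¹ := by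
        noncomm_ring
      rw [hfac, hSsum, Matrix.mul_smul, Matrix.smul_mul]
      simp only [Matrix.mul_assoc, hc2, hRinv, Matrix.mul_one]
    have hYu : IsUnit (R⁻¹ * S * R⁻¹) := (hRiu.mul hSu).mul hRiu
    have hYpd : (R⁻¹ * S * R⁻¹).PosDef :=
      absKey ((Matrix.isUnit_iff_isUnit_det _).1 hYu) (by rw [habsY]; exact hsum.symm)
    have hYherm : (R⁻¹ * S * R⁻¹)ᴴ = R⁻¹ * S * R⁻¹ := hYpd.1.eq
    have hSH2 : Sᴴ = S := by
      have h5 : R⁻¹ * Sᴴ * R⁻¹ = R⁻¹ * S * R⁻¹ := by rw [← hYH]; exact hYherm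
      have h6 := congrArg (fun Z => R * (Z * R)) h5
      simp only [Matrix.mul_assoc, hc1, hinvR, Matrix.mul_one] at h6
      exact h6
    have hBA : B * A = S * S := by
      rw [← hABBA, ← hS.1, Matrix.conjTranspose_mul, hSH2]
    rw [← hS.1, hBA]
  · -- commute → equality
    intro hcomm
    rw [hGdef]
    have cB : B * R = R * B := commute_sqrt hA.posSemidef hAdet hBu hcomm.symm
    have cBi : R⁻¹ * B = B * R⁻¹ := by
      calc R⁻¹ * B = R⁻¹ * B * (R * R⁻¹) := by rw [hRinv, Matrix.mul_one]
        _ = R⁻¹ * (B * R) * R⁻¹ := by simp only [Matrix.mul_assoc]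
        _ = R⁻¹ * (R * B) * R⁻¹ := by rw [cB]
        _ = B * R⁻¹ := by rw [← Matrix.mul_assoc, hinvR, Matrix.one_mul]
    have hRC : R * (R⁻¹ * B * R⁻¹) = (R⁻¹ * B * R⁻¹) * R := by
      calc R * (R⁻¹ * B * R⁻¹) = B * R⁻¹ := by
            simp only [Matrix.mul_assoc]; rw [hc1]
        _ = R⁻¹ * B := cBi.symm
        _ = R⁻¹ * B * (R⁻¹ * R) := by rw [hinvR, Matrix.mul_one]
        _ = (R⁻¹ * B * R⁻¹) * R := by simp only [Matrix.mul_assoc]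
    have hQR : R * Q = Q * R := commute_sqrt _ hCdet hRu hRC
    have hQR' : ∀ X : Matrix (Fin n) (Fin n) ℂ, Q * (R * X) = R * (Q * X) := fun X => by
      rw [← Matrix.mul_assoc, ← hQR, Matrix.mul_assoc]
    have hGG : (R * Q * R) * (R * Q * R) = A * B := by
      simp only [Matrix.mul_assoc]
      rw [← hR2]
      simp only [Matrix.mul_assoc, hQR', hQ2', hc1, hc2, hRinv, hinvR, Matrix.mul_one,
        Matrix.one_mul]
    have hGS : R * Q * R = S := by
      refine principal_sqrt_unique ?_ (posDef_hasPosSpectrum hGpd) hS.2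
      rw [hGG, hS.1]
    have hSTeq : S = T := by
      refine principal_sqrt_unique ?_ hS.2 hT.2
      rw [hS.1, hT.1, hcomm]
    have hmain : (2 * (a : ℂ) * b) • (R * Q * R) = ((a : ℂ) * b) • (S + T) := by
      rw [hGS, ← hSTeq, ← two_smul ℂ S, smul_smul]
      congr 1
      ring
    rw [hmain]

end Heron
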